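/- Let f : ℝⁿ → ℝ be convex, Lipschitz on bounded sets, with S(f,0) := {x : f(x) ≤ 0} nonempty, and suppose the Slater condition holds: f(z) < 0 for some z. Then the subgradient projection P_f is boundedly linearly regular: for every bounded set K ⊆ ℝⁿ there is γ > 0 such that d(x, S(f,0)) ≤ γ ‖x − P_f x‖ for all x ∈ K. -/

import Mathlib

theorem subgradient_projection_boundedly_linearly_regular
    (n : ℕ) (f : EuclideanSpace ℝ (Fin n) → ℝ)
    (hconv : ConvexOn ℝ Set.univ f)
    (hLip : ∀ S : Set (EuclideanSpace ℝ (Fin n)), Bornology.IsBounded S →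
      ∃ L : NNReal, LipschitzOnWith L f S)
    (g : EuclideanSpace ℝ (Fin n) → EuclideanSpace ℝ (Fin n))
    (hg : ∀ x y : EuclideanSpace ℝ (Fin n), (inner ℝ (g x) (y - x) : ℝ) ≤ f y - f x)
    (hSlater : ∃ z, f z < 0)
    (Pf : EuclideanSpace ℝ (Fin n) → EuclideanSpace ℝ (Fin n))
    (hPf : ∀ x, Pf x = if 0 < f x then x - (f x / ‖g x‖ ^ 2) • g x else x) :
    ∀ K : Set (EuclideanSpace ℝ (Fin n)), Bornology.IsBounded K →
      ∃ γ > 0, ∀ x ∈ K, Metric.infDist x {y | f y ≤ 0} ≤ γ * ‖x - Pf x‖ := by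
  intro K hK
  obtain ⟨z, hz⟩ := hSlater
  obtain ⟨R0, hR0⟩ := hK.subset_closedBall 0
  set R : ℝ := max R0 0 with hRdef
  have hRnn : 0 ≤ R := le_max_right _ _
  have hKR : K ⊆ Metric.closedBall 0 R :=
    hR0.trans (Metric.closedBall_subset_closedBall (le_max_left _ _))
  obtain ⟨L, hL⟩ := hLip (Metric.closedBall 0 (R + 1)) Metric.isBounded_closedBall
  set c : ℝ := -f z with hcdef
  have hc : 0 < c := by simpa [hcdef] using hz
  set M : ℝ := R + ‖z‖ with hMdef
  have hM : 0 ≤ M := add_nonneg hRnn (norm_nonneg _)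
  refine ⟨M * (L + 1) / c + 1, by positivity, ?_⟩
  intro x hx
  set γ : ℝ := M * (L + 1) / c + 1 with hγdef
  have hγL : M * (L + 1) / c ≤ γ := by simp [hγdef]
  by_cases hfx : 0 < f x
  · -- main case
    have hxz : (inner ℝ (g x) (z - x) : ℝ) ≤ f z - f x := hg x z
    have hgne : g x ≠ 0 := by
      intro h
      rw [h] at hxz
      simp at hxz
      linarith
    have hgn : 0 < ‖g x‖ := norm_pos_iff.mpr hgne
    -- bound on ‖g x‖
    have hxball : x ∈ Metric.closedBall (0 : EuclideanSpace ℝ (Fin n)) (R + 1) :=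
      Metric.closedBall_subset_closedBall (by linarith) (hKR hx)
    have hgL : ‖g x‖ ≤ L := by
      set y : EuclideanSpace ℝ (Fin n) := x + ‖g x‖⁻¹ • g x with hydef
      have hyx : y - x = ‖g x‖⁻¹ • g x := by simp [hydef]
      have hdyx : dist y x = 1 := by
        rw [dist_eq_norm, hyx, norm_smul]
        simp [abs_of_pos (inv_pos.mpr hgn), inv_mul_cancel₀ (ne_of_gt hgn)]
      have hyball : y ∈ Metric.closedBall (0 : EuclideanSpace ℝ (Fin n)) (R + 1) := by
        have hxb : ‖x‖ ≤ R := by simpa using hKR hx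
        have : ‖y‖ ≤ ‖x‖ + 1 := by
          calc ‖y‖ ≤ ‖x‖ + ‖‖g x‖⁻¹ • g x‖ := norm_add_le _ _
          _ = ‖x‖ + 1 := by
            rw [norm_smul]
            simp [abs_of_pos (inv_pos.mpr hgn), inv_mul_cancel₀ (ne_of_gt hgn)]
        simpa using this.trans (by linarith)
      have h1 : (inner ℝ (g x) (y - x) : ℝ) = ‖g x‖ := by
        rw [hyx, real_inner_smul_right, real_inner_self_eq_norm_sq]
        field_simp
      have h2 : f y - f x ≤ L * dist y x := by
        have := (hL.dist_le_mul y hyball x hxball)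
        calc f y - f x ≤ |f y - f x| := le_abs_self _
        _ = dist (f y) (f x) := (Real.dist_eq _ _).symm
        _ ≤ L * dist y x := this
      have := (hg x y).trans h2
      rw [h1, hdyx, mul_one] at this
      exact this
    -- construct w on segment
    set t : ℝ := f x / (f x - f z) with htdef
    have hden : 0 < f x - f z := by linarith
    have ht0 : 0 < t := div_pos hfx hden
    have ht1 : t ≤ 1 := by
      rw [htdef, div_le_one hden]; linarith
    set w : EuclideanSpace ℝ (Fin n) := (1 - t) • x + t • z with hwdef
    have hfw : f w ≤ 0 := by
      have := hconv.2 (Set.mem_univ x) (Set.mem_univ z) (by linarith : (0:ℝ) ≤ 1 - t)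
        (le_of_lt ht0) (by ring)
      have heq : (1 - t) * f x + t * f z = 0 := by
        rw [htdef]; field_simp; ring
      calc f w ≤ (1 - t) • f x + t • f z := this
      _ = 0 := by rw [smul_eq_mul, smul_eq_mul, heq]
    have hwS : w ∈ {y | f y ≤ 0} := hfw
    have hdist : Metric.infDist x {y | f y ≤ 0} ≤ t * M := by
      have h1 : Metric.infDist x {y | f y ≤ 0} ≤ dist x w :=
        Metric.infDist_le_dist_of_mem hwS
      have h2 : dist x w = t * ‖x - z‖ := by
        have : x - w = t • (x - z) := by
          rw [hwdef]
          module
        rw [dist_eq_norm, this, norm_smul, Real.norm_eq_abs, abs_of_pos ht0]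
      have h3 : ‖x - z‖ ≤ M := by
        have hxb : ‖x‖ ≤ R := by simpa using hKR hx
        calc ‖x - z‖ ≤ ‖x‖ + ‖z‖ := norm_sub_le _ _
        _ ≤ M := by rw [hMdef]; linarith
      calc Metric.infDist x {y | f y ≤ 0} ≤ dist x w := h1
      _ = t * ‖x - z‖ := h2
      _ ≤ t * M := by nlinarith
    have hPfx : ‖x - Pf x‖ = f x / ‖g x‖ := by
      rw [hPf x, if_pos hfx]
      have : x - (x - (f x / ‖g x‖ ^ 2) • g x) = (f x / ‖g x‖ ^ 2) • g x := by module
      rw [this, norm_smul, Real.norm_eq_abs,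
        abs_of_pos (div_pos hfx (pow_pos hgn 2))]
      field_simp
    rw [hPfx]
    -- final inequality: t * M ≤ γ * (f x / ‖g x‖)
    refine hdist.trans ?_
    have hcle : c ≤ f x - f z := by rw [hcdef]; linarith
    have hγ0 : 0 ≤ γ := by
      rw [hγdef]
      have : (0:ℝ) ≤ M * (↑L + 1) / c := div_nonneg (by positivity) hc.le
      linarith
    have key : M * ‖g x‖ ≤ γ * (f x - f z) := by
      have h1 : γ * c ≤ γ * (f x - f z) := mul_le_mul_of_nonneg_left hcle hγ0
      have h2 : γ * c = M * (↑L + 1) + c := by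
        rw [hγdef]; field_simp
      have h3 : M * ‖g x‖ ≤ M * (↑L + 1) :=
        mul_le_mul_of_nonneg_left (by linarith) hM
      linarith
    rw [htdef, div_mul_eq_mul_div, mul_div_assoc', div_le_div_iff₀ hden hgn]
    nlinarith [mul_le_mul_of_nonneg_left key hfx.le]
  · -- trivial case
    have hx0 : f x ≤ 0 := le_of_not_gt hfx
    have : Metric.infDist x {y | f y ≤ 0} = 0 :=
      Metric.infDist_zero_of_mem hx0
    rw [this]
    positivity
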